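/- In the group G_n, for odd l > 1, conjugation by g_l^k sends g₁^{k₁} ⋯ g_{2n+1}^{k_{2n+1}} to g₁^{k₁ + k·k'_{l-1}·(-1)^{k₂+k₄+⋯+k_{l-3}}} g₂^{k₂} ⋯ g_{2n+1}^{k_{2n+1}}, where k'_{l-1} = k_{l-1} mod 2. -/

import Mathlib

/-- The defining relators of the group `Gₙ`: generators are indexed by `{1, …, 2n+1}`;
for even `j`, `g_j g₁ g_j⁻¹ = g₁⁻¹` and `g_{j+1} g_j g_{j+1}⁻¹ = g₁ g_j`;
all other pairs of generators commute. -/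
def relsG (n : ℕ) : Set (FreeGroup {i : ℕ // 1 ≤ i ∧ i ≤ 2*n+1}) :=
  { w | (∃ j : {i : ℕ // 1 ≤ i ∧ i ≤ 2*n+1}, j.1 % 2 = 0 ∧
          w = FreeGroup.of j * FreeGroup.of ⟨1, by omega⟩ * (FreeGroup.of j)⁻¹ *
              FreeGroup.of ⟨1, by omega⟩) ∨
        (∃ j j1 : {i : ℕ // 1 ≤ i ∧ i ≤ 2*n+1}, j.1 % 2 = 0 ∧ j1.1 = j.1 + 1 ∧
          w = FreeGroup.of j1 * FreeGroup.of j * (FreeGroup.of j1)⁻¹ *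
              (FreeGroup.of ⟨1, by omega⟩ * FreeGroup.of j)⁻¹) ∨
        (∃ a b : {i : ℕ // 1 ≤ i ∧ i ≤ 2*n+1},
          ¬ ((a.1 = 1 ∧ b.1 % 2 = 0) ∨ (b.1 = 1 ∧ a.1 % 2 = 0) ∨
             (b.1 % 2 = 0 ∧ a.1 = b.1 + 1) ∨ (a.1 % 2 = 0 ∧ b.1 = a.1 + 1)) ∧
          w = FreeGroup.of a * FreeGroup.of b * (FreeGroup.of a)⁻¹ * (FreeGroup.of b)⁻¹) }

/-- The polycyclic group `Gₙ` of Hirsch length `2n+1`. -/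
abbrev Gn (n : ℕ) := PresentedGroup (relsG n)

/-- The generator `g_i` of `Gₙ` (1-based index, `1 ≤ i ≤ 2n+1`). -/
def gg (n : ℕ) (i : ℕ) : Gn n :=
  if h : 1 ≤ i ∧ i ≤ 2*n+1 then PresentedGroup.of ⟨i, h⟩ else 1

/-- `(-1)^m` for an integer `m`: `1` if `m` is even, `-1` if `m` is odd. -/
def eps (m : ℤ) : ℤ := if m % 2 = 0 then 1 else -1

lemma eps_add (x y : ℤ) : eps (x + y) = eps x * eps y := by
  simp only [eps]; split_ifs <;> omega

/-! ### Relations in `Gₙ` -/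

lemma rels_one {n : ℕ} {w : FreeGroup {i : ℕ // 1 ≤ i ∧ i ≤ 2*n+1}} (h : w ∈ relsG n) :
    (QuotientGroup.mk w : Gn n) = 1 :=
  (QuotientGroup.eq_one_iff w).mpr (Subgroup.subset_normalClosure h)

lemma gg_eq {n i : ℕ} (h : 1 ≤ i ∧ i ≤ 2*n+1) :
    gg n i = QuotientGroup.mk (FreeGroup.of ⟨i, h⟩) := by
  rw [gg, dif_pos h]; rfl

lemma relA {n j : ℕ} (hj2 : j % 2 = 0) (hj : 1 ≤ j ∧ j ≤ 2*n+1) :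
    gg n j * gg n 1 * (gg n j)⁻¹ = (gg n 1)⁻¹ := by
  have h1 : (1:ℕ) ≤ 1 ∧ 1 ≤ 2*n+1 := by omega
  have h := rels_one (n := n) (Or.inl ⟨⟨j, hj⟩, hj2, rfl⟩)
  simp only [QuotientGroup.mk_mul, QuotientGroup.mk_inv] at h
  rw [gg_eq hj, gg_eq h1]
  exact mul_eq_one_iff_eq_inv.mp h

lemma relB {n j : ℕ} (hj2 : j % 2 = 0) (hj : 1 ≤ j ∧ j ≤ 2*n+1) (hj1 : j+1 ≤ 2*n+1) :
    gg n (j+1) * gg n j * (gg n (j+1))⁻¹ = gg n 1 * gg n j := by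
  have h1 : (1:ℕ) ≤ 1 ∧ 1 ≤ 2*n+1 := by omega
  have hj1' : 1 ≤ j+1 ∧ j+1 ≤ 2*n+1 := by omega
  have h := rels_one (n := n) (Or.inr (Or.inl ⟨⟨j, hj⟩, ⟨j+1, hj1'⟩, hj2, rfl, rfl⟩))
  simp only [QuotientGroup.mk_mul, QuotientGroup.mk_inv] at h
  rw [gg_eq hj, gg_eq h1, gg_eq hj1']
  exact mul_inv_eq_one.mp h

lemma relC {n a b : ℕ} (ha : 1 ≤ a ∧ a ≤ 2*n+1) (hb : 1 ≤ b ∧ b ≤ 2*n+1)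
    (hns : ¬ ((a = 1 ∧ b % 2 = 0) ∨ (b = 1 ∧ a % 2 = 0) ∨
             (b % 2 = 0 ∧ a = b + 1) ∨ (a % 2 = 0 ∧ b = a + 1))) :
    Commute (gg n a) (gg n b) := by
  have h := rels_one (n := n) (Or.inr (Or.inr ⟨⟨a, ha⟩, ⟨b, hb⟩, hns, rfl⟩))
  simp only [QuotientGroup.mk_mul, QuotientGroup.mk_inv] at h
  rw [Commute, SemiconjBy, gg_eq ha, gg_eq hb]
  set x : Gn n := QuotientGroup.mk (FreeGroup.of ⟨a, ha⟩)
  set y : Gn n := QuotientGroup.mk (FreeGroup.of ⟨b, hb⟩)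
  have h2 : x * y * x⁻¹ = y := mul_inv_eq_one.mp h
  calc x * y = (x * y * x⁻¹) * x := by group
  _ = y * x := by rw [h2]

/-! ### Abstract group lemmas -/

section abstract
variable {G : Type*} [Group G] {g x a b : G}

lemma conjPowEps (h : g * x * g⁻¹ = x⁻¹) (m : ℤ) : g ^ m * x * (g ^ m)⁻¹ = x ^ eps m := by
  have h2 : g * x⁻¹ * g⁻¹ = x := by
    have := congrArg (·⁻¹) h
    simpa [mul_inv_rev, mul_assoc] using this
  have hinv : g⁻¹ * x * g = x⁻¹ := by
    conv_lhs => rw [← h2]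
    group
  induction m using Int.induction_on with
  | zero => simp [eps]
  | succ k ih =>
      have e1 : g ^ ((k:ℤ)+1) * x * (g ^ ((k:ℤ)+1))⁻¹
          = g * (g ^ (k:ℤ) * x * (g ^ (k:ℤ))⁻¹) * g⁻¹ := by group
      rw [e1, ih, ← conj_zpow, h, inv_zpow, ← zpow_neg]
      congr 1
      simp only [eps]; split_ifs <;> omega
  | pred k ih =>
      have e1 : g ^ (-(k:ℤ)-1) * x * (g ^ (-(k:ℤ)-1))⁻¹
          = g⁻¹ * (g ^ (-(k:ℤ)) * x * (g ^ (-(k:ℤ)))⁻¹) * g := by group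
      rw [e1, ih]
      have e2 : g⁻¹ * x ^ eps (-(k:ℤ)) * g = (g⁻¹ * x * g⁻¹⁻¹) ^ eps (-(k:ℤ)) := by
        rw [conj_zpow, inv_inv]
      rw [e2, inv_inv, hinv, inv_zpow, ← zpow_neg]
      congr 1
      simp only [eps]; split_ifs <;> omega

lemma conj_swap (h : g * x * g⁻¹ = x⁻¹) (m e : ℤ) :
    g ^ m * x ^ e = x ^ (eps m * e) * g ^ m := by
  have key : g ^ m * x ^ e * (g ^ m)⁻¹ = x ^ (eps m * e) := by
    have e1 : g ^ m * x ^ e * (g ^ m)⁻¹ = (g ^ m * x * (g ^ m)⁻¹) ^ e := by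
      rw [conj_zpow]
    rw [e1, conjPowEps h, ← zpow_mul]
  rw [← key]; group

lemma ab_pow (h : b * x * b⁻¹ = x⁻¹) (m : ℤ) :
    (x * b) ^ m = x ^ (m % 2) * b ^ m := by
  induction m using Int.induction_on with
  | zero => simp
  | succ k ih =>
      rw [zpow_add_one, ih, zpow_add_one]
      have e1 : x ^ ((k:ℤ) % 2) * b ^ (k:ℤ) * (x * b)
          = x ^ ((k:ℤ) % 2) * (b ^ (k:ℤ) * x ^ (1:ℤ)) * b := by group
      rw [e1, conj_swap h, mul_one]
      have e2 : ((k:ℤ)+1) % 2 = (k:ℤ) % 2 + eps (k:ℤ) := by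
        simp only [eps]; split_ifs <;> omega
      rw [e2, zpow_add]; group
  | pred k ih =>
      rw [zpow_sub_one, ih, zpow_sub_one]
      have e1 : x ^ (-(k:ℤ) % 2) * b ^ (-(k:ℤ)) * (x * b)⁻¹
          = x ^ (-(k:ℤ) % 2) * (b ^ (-(k:ℤ)-1) * x ^ (-1:ℤ)) := by group
      rw [e1, conj_swap h]
      have e2 : (-(k:ℤ)-1) % 2 = -(k:ℤ) % 2 + eps (-(k:ℤ)-1) * (-1) := by
        simp only [eps]; split_ifs <;> omega
      rw [e2, zpow_add]; group

lemma conj_b_single (hc : Commute g a) (hgb : g * b * g⁻¹ = a * b) (q : ℤ) :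
    g ^ q * b * (g ^ q)⁻¹ = a ^ q * b := by
  have h2 : g⁻¹ * (a * b) * g = b := by rw [← hgb]; group
  have h3 : a * (g⁻¹ * b * g) = g⁻¹ * (a * b) * g := by
    calc a * (g⁻¹ * b * g) = (a * g⁻¹) * b * g := by group
    _ = (g⁻¹ * a) * b * g := by rw [← hc.inv_left.eq]
    _ = g⁻¹ * (a * b) * g := by group
  have h' : g⁻¹ * b * g = a⁻¹ * b := by
    have h4 := h3.trans h2
    calc g⁻¹ * b * g = a⁻¹ * (a * (g⁻¹ * b * g)) := by group
    _ = a⁻¹ * b := by rw [h4]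
  induction q using Int.induction_on with
  | zero => simp
  | succ k ih =>
      have e1 : g ^ ((k:ℤ)+1) * b * (g ^ ((k:ℤ)+1))⁻¹
          = g * (g ^ (k:ℤ) * b * (g ^ (k:ℤ))⁻¹) * g⁻¹ := by group
      rw [e1, ih]
      have e2 : g * (a ^ (k:ℤ) * b) * g⁻¹ = (g * a ^ (k:ℤ) * g⁻¹) * (g * b * g⁻¹) := by group
      have e3 : g * a ^ (k:ℤ) * g⁻¹ = a ^ (k:ℤ) := by
        rw [(hc.zpow_right (k:ℤ)).eq]; group
      rw [e2, e3, hgb, zpow_add_one]; group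
  | pred k ih =>
      have e1 : g ^ (-(k:ℤ)-1) * b * (g ^ (-(k:ℤ)-1))⁻¹
          = g⁻¹ * (g ^ (-(k:ℤ)) * b * (g ^ (-(k:ℤ)))⁻¹) * g := by group
      rw [e1, ih]
      have e2 : g⁻¹ * (a ^ (-(k:ℤ)) * b) * g = (g⁻¹ * a ^ (-(k:ℤ)) * g) * (g⁻¹ * b * g) := by
        group
      have e3 : g⁻¹ * a ^ (-(k:ℤ)) * g = a ^ (-(k:ℤ)) := by
        rw [(hc.zpow_right (-(k:ℤ))).inv_left.eq]; group
      rw [e2, e3, h', zpow_sub_one]; group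

lemma conj_mixed (hc : Commute g a) (hgb : g * b * g⁻¹ = a * b) (hba : b * a * b⁻¹ = a⁻¹)
    (kk m : ℤ) : g ^ kk * b ^ m * (g ^ kk)⁻¹ = a ^ (kk * (m % 2)) * b ^ m := by
  have h2 : g ^ kk * b ^ m * (g ^ kk)⁻¹ = (g ^ kk * b * (g ^ kk)⁻¹) ^ m := by
    rw [conj_zpow]
  have hbx : b * a ^ kk * b⁻¹ = (a ^ kk)⁻¹ := by
    rw [← conj_zpow, hba, inv_zpow]
  rw [h2, conj_b_single hc hgb, ab_pow hbx, ← zpow_mul]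

end abstract

/-! ### Commutation lemmas in `Gₙ` -/

lemma comm_l {n l j : ℕ} (hlo : l % 2 = 1) (hl1 : 3 ≤ l) (hl : l ≤ 2*n+1)
    (hj1 : 1 ≤ j) (hj2 : j ≤ 2*n+1) (hne : j + 1 ≠ l) : Commute (gg n l) (gg n j) := by
  rcases eq_or_ne j l with rfl | hjl
  · exact Commute.refl _
  · exact relC ⟨by omega, hl⟩ ⟨hj1, hj2⟩ (by omega)

lemma comm_a {n j : ℕ} (hjo : j % 2 = 1) (hj2 : j ≤ 2*n+1) : Commute (gg n 1) (gg n j) := by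
  rcases eq_or_ne j 1 with rfl | hj1
  · exact Commute.refl _
  · exact relC ⟨by omega, by omega⟩ ⟨by omega, hj2⟩ (by omega)

/-! ### Moving a power of `g₁` across a product -/

lemma moveProd {n : ℕ} (ks : ℕ → ℤ) (m : ℕ) (hm : 2*m+1 ≤ 2*n+1) (e : ℤ) :
    ((List.range (2*m)).map (fun i => gg n (i+2) ^ ks (i+2))).prod * gg n 1 ^ e
    = gg n 1 ^ (e * eps (∑ i ∈ Finset.range m, ks (2*i+2))) *
      ((List.range (2*m)).map (fun i => gg n (i+2) ^ ks (i+2))).prod := by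
  induction m generalizing e with
  | zero => simp [eps]
  | succ m ih =>
    have hm' : 2*m+1 ≤ 2*n+1 := by omega
    have hsplit : List.range (2*(m+1)) = List.range (2*m) ++ [2*m, 2*m+1] := by
      have h2 : 2*(m+1) = 2*m + 2 := by ring
      rw [h2, List.range_add]
      norm_num [List.range_succ]
    rw [hsplit]
    simp only [List.map_append, List.prod_append, List.map_cons, List.map_nil,
      List.prod_cons, List.prod_nil, mul_one]
    set a := gg n 1 with ha
    set P := ((List.range (2*m)).map (fun i => gg n (i+2) ^ ks (i+2))).prod with hP
    set g2 := gg n (2*m+2) with hg2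
    set g3 := gg n (2*m+1+2) with hg3
    have hrelA : g2 * a * g2⁻¹ = a⁻¹ := relA (by omega) ⟨by omega, by omega⟩
    have hc3 : Commute (a ^ e) (g3 ^ ks (2*m+1+2)) :=
      (comm_a (n := n) (j := 2*m+3) (by omega) (by omega)).zpow_zpow e (ks (2*m+1+2))
    calc P * (g2 ^ ks (2*m+2) * g3 ^ ks (2*m+1+2)) * a ^ e
        = P * g2 ^ ks (2*m+2) * (g3 ^ ks (2*m+1+2) * a ^ e) := by group
      _ = P * g2 ^ ks (2*m+2) * (a ^ e * g3 ^ ks (2*m+1+2)) := by rw [← hc3.eq]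
      _ = P * (g2 ^ ks (2*m+2) * a ^ e) * g3 ^ ks (2*m+1+2) := by group
      _ = P * (a ^ (eps (ks (2*m+2)) * e) * g2 ^ ks (2*m+2)) * g3 ^ ks (2*m+1+2) := by
          rw [conj_swap hrelA]
      _ = (P * a ^ (eps (ks (2*m+2)) * e)) * (g2 ^ ks (2*m+2) * g3 ^ ks (2*m+1+2)) := by
          group
      _ = (a ^ ((eps (ks (2*m+2)) * e) * eps (∑ i ∈ Finset.range m, ks (2*i+2))) * P) *
            (g2 ^ ks (2*m+2) * g3 ^ ks (2*m+1+2)) := by rw [ih hm']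
      _ = a ^ (e * eps (∑ i ∈ Finset.range (m+1), ks (2*i+2))) *
            (P * (g2 ^ ks (2*m+2) * g3 ^ ks (2*m+1+2))) := by
          rw [Finset.sum_range_succ, eps_add]
          have : (eps (ks (2*m+2)) * e) * eps (∑ i ∈ Finset.range m, ks (2*i+2))
              = e * (eps (∑ i ∈ Finset.range m, ks (2*i+2)) * eps (ks (2*m+2))) := by ring
          rw [this]; group
lemma prod_splitG {M : Type*} [Monoid M] (p q : ℕ) (F : ℕ → M) :
    ((List.range (p+q)).map F).prod
    = ((List.range p).map F).prod * ((List.range q).map (fun i => F (p+i))).prod := by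
  rw [List.range_add]; simp [List.map_map]; rfl

lemma prod_map_congr {M : Type*} [Monoid M] (L : List ℕ) {F G : ℕ → M}
    (h : ∀ i, F i = G i) : (L.map F).prod = (L.map G).prod := by
  rw [funext h]

lemma prod_map_range_one {M : Type*} [Monoid M] (F : ℕ → M) :
    ((List.range 1).map F).prod = F 0 := by simp [List.range_succ]

lemma split_lhs {M : Type*} [Monoid M] (f : ℕ → M) (n m r : ℕ) (h : 2*n = 2*m+2+r) :
    ((List.range (2*n+1)).map (fun i => f (i+1))).prod
    = f 1 * ((List.range (2*m)).map (fun i => f (i+2))).prod * f (2*m+2) *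
      ((List.range (r+1)).map (fun i => f (2*m+3+i))).prod := by
  rw [show 2*n+1 = (1+2*m+1)+(r+1) by omega, prod_splitG (1+2*m+1) (r+1),
    prod_splitG (1+2*m) 1, prod_splitG 1 (2*m)]
  rw [prod_map_range_one, prod_map_range_one,
    prod_map_congr (List.range (2*m)) (G := fun i => f (i+2))
      (fun i => by congr 1; omega),
    prod_map_congr (List.range (r+1)) (G := fun i => f (2*m+3+i))
      (fun i => by congr 1; omega)]
  congr 2
  exact congrArg f (by omega)

lemma split_rhs {M : Type*} [Monoid M] (f : ℕ → M) (n m r : ℕ) (h : 2*n = 2*m+2+r) :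
    ((List.range (2*n)).map (fun i => f (i+2))).prod
    = ((List.range (2*m)).map (fun i => f (i+2))).prod * f (2*m+2) *
      ((List.range (r+1)).map (fun i => f (2*m+3+i))).prod := by
  rw [show 2*n = (2*m+1)+(r+1) by omega, prod_splitG (2*m+1) (r+1), prod_splitG (2*m) 1]
  rw [prod_map_range_one,
    prod_map_congr (List.range (r+1)) (G := fun i => f (2*m+3+i))
      (fun i => by congr 1; omega)]

theorem stmt12 (n : ℕ) (l : ℕ) (hlo : l % 2 = 1) (hl1 : 3 ≤ l) (hl2 : l ≤ 2*n+1)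
    (kk : ℤ) (ks : ℕ → ℤ) :
    gg n l ^ kk * ((List.range (2*n+1)).map (fun i => gg n (i+1) ^ ks (i+1))).prod *
      (gg n l ^ kk)⁻¹ =
    gg n 1 ^ (ks 1 + kk * (ks (l-1) % 2) * eps (∑ i ∈ Finset.range ((l-3)/2), ks (2*i+2))) *
      ((List.range (2*n)).map (fun i => gg n (i+2) ^ ks (i+2))).prod := by
  obtain ⟨m, rfl⟩ : ∃ m, l = 2*m+3 := ⟨(l-3)/2, by omega⟩
  obtain ⟨r, hr⟩ : ∃ r, 2*n = 2*m+2+r := ⟨2*n-(2*m+2), by omega⟩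
  rw [show 2*m+3-1 = 2*m+2 by omega, show (2*m+3-3)/2 = m by omega]
  have hfl := split_lhs (fun j => gg n j ^ ks j) n m r hr
  have hfr := split_rhs (fun j => gg n j ^ ks j) n m r hr
  rw [hfl, hfr]
  set a := gg n 1 with ha
  set g := gg n (2*m+3) with hg
  set b := gg n (2*m+2) with hb
  set A2 := ((List.range (2*m)).map (fun i => gg n (i+2) ^ ks (i+2))).prod with hA2
  set C := ((List.range (r+1)).map (fun i => gg n (2*m+3+i) ^ ks (2*m+3+i))).prod with hC
  set k2 := ks (2*m+2) with hk2
  set S := ∑ i ∈ Finset.range m, ks (2*i+2) with hS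
  -- commutation facts
  have hcga : Commute g a := (comm_a (n := n) (j := 2*m+3) (by omega) (by omega)).symm
  have hcA2 : Commute (g ^ kk) A2 := by
    apply Commute.zpow_left
    apply Commute.list_prod_right
    intro x hx
    obtain ⟨i, hi, rfl⟩ := List.mem_map.mp hx
    have hi' := List.mem_range.mp hi
    exact (comm_l (by omega) (by omega) (by omega) (by omega) (by omega)
      (by omega)).zpow_right _
  have hcC : Commute (g ^ kk) C := by
    apply Commute.zpow_left
    apply Commute.list_prod_right
    intro x hx
    obtain ⟨i, hi, rfl⟩ := List.mem_map.mp hx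
    have hi' := List.mem_range.mp hi
    exact (comm_l (by omega) (by omega) (by omega) (by omega) (by omega)
      (by omega)).zpow_right _
  have hcgak : Commute (g ^ kk) (a ^ ks 1) := hcga.zpow_zpow kk (ks 1)
  have hgb : g * b * g⁻¹ = a * b :=
    relB (n := n) (j := 2*m+2) (by omega) ⟨by omega, by omega⟩ (by omega)
  have hba : b * a * b⁻¹ = a⁻¹ := relA (by omega) ⟨by omega, by omega⟩
  have hmid : g ^ kk * b ^ k2 * (g ^ kk)⁻¹ = a ^ (kk * (k2 % 2)) * b ^ k2 :=
    conj_mixed hcga hgb hba kk k2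
  have hmove : A2 * a ^ (kk * (k2 % 2)) = a ^ ((kk * (k2 % 2)) * eps S) * A2 :=
    moveProd ks m (by omega) _
  have conj1 : g ^ kk * (a ^ ks 1) * (g ^ kk)⁻¹ = a ^ ks 1 := by
    rw [hcgak.eq]; group
  have conj2 : g ^ kk * A2 * (g ^ kk)⁻¹ = A2 := by rw [hcA2.eq]; group
  have conj3 : g ^ kk * C * (g ^ kk)⁻¹ = C := by rw [hcC.eq]; group
  calc g ^ kk * (a ^ ks 1 * A2 * b ^ k2 * C) * (g ^ kk)⁻¹
      = (g ^ kk * (a ^ ks 1) * (g ^ kk)⁻¹) * (g ^ kk * A2 * (g ^ kk)⁻¹) *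
        (g ^ kk * b ^ k2 * (g ^ kk)⁻¹) * (g ^ kk * C * (g ^ kk)⁻¹) := by group
    _ = a ^ ks 1 * A2 * (a ^ (kk * (k2 % 2)) * b ^ k2) * C := by
        rw [conj1, conj2, conj3, hmid]
    _ = a ^ ks 1 * (A2 * a ^ (kk * (k2 % 2))) * b ^ k2 * C := by group
    _ = a ^ ks 1 * (a ^ ((kk * (k2 % 2)) * eps S) * A2) * b ^ k2 * C := by rw [hmove]
    _ = a ^ (ks 1 + kk * (k2 % 2) * eps S) * (A2 * b ^ k2 * C) := by
        rw [zpow_add]; group
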